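/- Reducibility of pure Warp-U moves with equal unit scales: suppose φ_mix(θ) = (1/K) Σ_{k=1}^K φ(θ − μ_k) (all scale matrices equal to the identity). Then each composed transformation G_{ψ',ψ}(θ) = θ − μ_ψ + μ_{ψ'} is a translation, and for any starting point θ_0 the chain generated by repeatedly applying G_{ψ',ψ} (without any Metropolis step) can only visit points of the lattice set {θ : θ = θ_0 + j_1 μ_1 + ... + j_K μ_K, j_1,...,j_K ∈ ℤ}. In particular, if the target π has compact support Ω, the chain can visit only finitely many points and cannot converge in total variation to π for any θ_0. -/

import Mathlib

open MeasureTheory Filter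

/-- Reducibility of pure Warp-U moves with equal unit scales: when
`φ_mix(θ) = (1/K) ∑ₖ φ(θ − μ_k)` (all scale matrices the identity), each composed
transformation `G_{ψ',ψ} = H_{ψ'} ∘ F_ψ` is the translation `θ ↦ θ − μ_ψ + μ_{ψ'}`; for
any starting point `θ₀` the chain generated by repeatedly applying such maps (without
any Metropolis step) can only visit points of the countable lattice
`{θ₀ + j₁μ₁ + ⋯ + j_Kμ_K : jₖ ∈ ℤ}`; and if the target `π` is non-atomic with compact
support `Ω`, then no sequence of distributions concentrated on the lattice (in
particular the law of the chain) can converge to `π` in total variation. -/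
theorem warpU_pure_moves_reducible
    (d K : ℕ) (hd : 0 < d) (hK : 0 < K)
    (μv : Fin K → (Fin d → ℝ)) (θ0 : Fin d → ℝ)
    (F H : Fin K → (Fin d → ℝ) → (Fin d → ℝ))
    (hF : F = fun k θ => θ - μv k) (hH : H = fun k θs => θs + μv k)
    (G : Fin K → Fin K → (Fin d → ℝ) → (Fin d → ℝ))
    (hG : G = fun ψ' ψ θ => H ψ' (F ψ θ))
    (L : Set (Fin d → ℝ))
    (hL : L = {θ | ∃ j : Fin K → ℤ, θ = θ0 + ∑ k, (j k : ℝ) • μv k}) :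
    (∀ ψ' ψ θ, G ψ' ψ θ = θ - μv ψ + μv ψ') ∧
    (∀ (a b : ℕ → Fin K) (orbit : ℕ → (Fin d → ℝ)),
      orbit 0 = θ0 → (∀ t, orbit (t + 1) = G (b t) (a t) (orbit t)) →
      ∀ t, orbit t ∈ L) ∧
    L.Countable ∧
    (∀ (π : Measure (Fin d → ℝ)) (Ω : Set (Fin d → ℝ)),
      IsCompact Ω → π Ω = 1 → IsProbabilityMeasure π → (∀ x, π {x} = 0) →
      ∀ ρ : ℕ → Measure (Fin d → ℝ), (∀ t, IsProbabilityMeasure (ρ t)) →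
        (∀ t, ρ t L = 1) →
        ¬ Tendsto (fun t => ⨆ A : {A : Set (Fin d → ℝ) // MeasurableSet A},
            |((ρ t) A.1).toReal - (π A.1).toReal|) atTop (nhds 0)) := by
  subst hF hH hG
  have hGeq : ∀ ψ' ψ θ, (fun ψ' ψ θ => ((fun k θs => θs + μv k) ψ')
      (((fun k (θ : Fin d → ℝ) => θ - μv k)) ψ θ)) ψ' ψ θ = θ - μv ψ + μv ψ' := by
    intro ψ' ψ θ; rfl
  refine ⟨fun ψ' ψ θ => rfl, ?_, ?_, ?_⟩
  · -- orbit stays in lattice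
    intro a b orbit h0 hstep t
    induction t with
    | zero =>
      subst hL
      exact ⟨fun _ => 0, by simp [h0]⟩
    | succ t ih =>
      rw [hL] at ih ⊢
      obtain ⟨j, hj⟩ := ih
      refine ⟨fun k => j k + (if k = b t then 1 else 0) - (if k = a t then 1 else 0), ?_⟩
      rw [hstep t, hj]
      have : ∀ k : Fin K,
          (((j k + (if k = b t then 1 else 0) - (if k = a t then 1 else 0) : ℤ) : ℝ)) • μv k
          = ((j k : ℝ)) • μv k + (if k = b t then μv k else 0) - (if k = a t then μv k else 0) := by
        intro k
        push_cast
        rcases eq_or_ne k (b t) with h1 | h1 <;> rcases eq_or_ne k (a t) with h2 | h2 <;>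
          simp [h1, h2, add_smul, sub_smul] <;> module
      simp only [this, Finset.sum_sub_distrib, Finset.sum_add_distrib,
        Finset.sum_ite_eq', Finset.mem_univ, if_true]
      abel
  · -- countability
    rw [hL]
    have : {θ : Fin d → ℝ | ∃ j : Fin K → ℤ, θ = θ0 + ∑ k, (j k : ℝ) • μv k}
        = Set.range (fun j : Fin K → ℤ => θ0 + ∑ k, (j k : ℝ) • μv k) := by
      ext θ; simp [eq_comm]
    rw [this]
    exact Set.countable_range _
  · -- TV non-convergence
    intro π Ω hΩ hπΩ hπprob hatoms ρ hρprob hρL htend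
    haveI : NullSingletonClass π := ⟨hatoms⟩
    have hLc : L.Countable := by
      rw [hL]
      have : {θ : Fin d → ℝ | ∃ j : Fin K → ℤ, θ = θ0 + ∑ k, (j k : ℝ) • μv k}
          = Set.range (fun j : Fin K → ℤ => θ0 + ∑ k, (j k : ℝ) • μv k) := by
        ext θ; simp [eq_comm]
      rw [this]
      exact Set.countable_range _
    have hLm : MeasurableSet L := hLc.measurableSet
    have hπL : π L = 0 := hLc.measure_zero π
    have key : ∀ t, (1 : ℝ) ≤ ⨆ A : {A : Set (Fin d → ℝ) // MeasurableSet A},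
        |((ρ t) A.1).toReal - (π A.1).toReal| := by
      intro t
      have hbdd : BddAbove (Set.range (fun A : {A : Set (Fin d → ℝ) // MeasurableSet A} =>
          |((ρ t) A.1).toReal - (π A.1).toReal|)) := by
        refine ⟨1, ?_⟩
        rintro x ⟨A, rfl⟩
        haveI := hρprob t
        have h1 : ((ρ t) A.1).toReal ≤ 1 := by
          have := prob_le_one (μ := ρ t) (s := A.1)
          simpa using ENNReal.toReal_le_of_le_ofReal zero_le_one (by simpa using this)
        have h2 : (π A.1).toReal ≤ 1 := by
          have := prob_le_one (μ := π) (s := A.1)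
          simpa using ENNReal.toReal_le_of_le_ofReal zero_le_one (by simpa using this)
        have h3 : 0 ≤ ((ρ t) A.1).toReal := ENNReal.toReal_nonneg
        have h4 : 0 ≤ (π A.1).toReal := ENNReal.toReal_nonneg
        rw [abs_sub_le_iff]
        constructor <;> linarith
      have := le_ciSup hbdd (⟨L, hLm⟩ : {A : Set (Fin d → ℝ) // MeasurableSet A})
      calc (1 : ℝ) = |((ρ t) L).toReal - (π L).toReal| := by
            rw [hρL t, hπL]; simp
        _ ≤ _ := this
    have : (1 : ℝ) ≤ 0 := ge_of_tendsto' htend key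
    linarith
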